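/- Let ρ > 1, α ∈ (0,1)∪(1,∞), and define c_α^{(n)}(ρ) := log n − min_{P ∈ P_n(ρ)} H_α(P) for integers n ≥ 2 (with c_α^{(1)}(ρ) := 0), and let c_α^{(∞)}(ρ) := (1/(α−1))·log(1 + (1 + α(ρ−1) − ρ^α)/((1−α)(ρ−1))) − (α/(α−1))·log(1 + (1 + α(ρ−1) − ρ^α)/((1−α)(ρ^α−1))). Then for every n ∈ ℕ, 0 ≤ c_α^{(n)}(ρ) ≤ c_α^{(2n)}(ρ) ≤ c_α^{(∞)}(ρ) ≤ log ρ. -/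

import Mathlib

open Finset

/-- `P` is a probability mass function, strictly positive on `{1,…,n}`. -/
def IsPMF (n : ℕ) (P : ℕ → ℝ) : Prop :=
  (∀ i ∈ Finset.Icc 1 n, 0 < P i) ∧ ∑ i ∈ Finset.Icc 1 n, P i = 1

/-- The ratio of the maximal to minimal mass of `P` on `{1,…,n}` is at most `ρ`. -/
def RatioBdd (n : ℕ) (ρ : ℝ) (P : ℕ → ℝ) : Prop :=
  ∀ i ∈ Finset.Icc 1 n, ∀ j ∈ Finset.Icc 1 n, P i ≤ ρ * P j

/-- `P` is nonincreasing on `{1,…,n}`. -/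
def DecOn (n : ℕ) (P : ℕ → ℝ) : Prop :=
  ∀ i ∈ Finset.Icc 1 n, ∀ j ∈ Finset.Icc 1 n, i ≤ j → P j ≤ P i

/-- Sum of the `k` largest masses of `P` on `{1,…,n}`. -/
noncomputable def topSum (n : ℕ) (P : ℕ → ℝ) (k : ℕ) : ℝ :=
  sSup ((fun s : Finset ℕ => ∑ i ∈ s, P i) '' {s | s ⊆ Finset.Icc 1 n ∧ s.card = k})

/-- `P ≺ Q`: `P` is majorized by `Q`, both viewed on `{1,…,n}`. -/
def MajorizedBy (n : ℕ) (P Q : ℕ → ℝ) : Prop :=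
  ∀ k, 1 ≤ k → k ≤ n - 1 → topSum n P k ≤ topSum n Q k

/-- Zero-padding of a pmf on `{1,…,m}` outside of `{1,…,m}`. -/
def padTo (m : ℕ) (Q : ℕ → ℝ) : ℕ → ℝ := fun i => if i ≤ m then Q i else 0

/-- Rényi entropy of order `α` of `P` on `{1,…,n}` (Shannon entropy for `α = 1`);
natural logarithms. -/
noncomputable def renyiH (n : ℕ) (α : ℝ) (P : ℕ → ℝ) : ℝ :=
  if α = 1 then -∑ i ∈ Finset.Icc 1 n, P i * Real.log (P i)
  else (1 - α)⁻¹ * Real.log (∑ i ∈ Finset.Icc 1 n, P i ^ α)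

/-- `c_α^{(n)}(ρ) = log n − min_{P ∈ 𝒫_n(ρ)} H_α(P)` for `n ≥ 2`, and `0` for `n ≤ 1`. -/
noncomputable def cN (α ρ : ℝ) (n : ℕ) : ℝ :=
  if n ≤ 1 then 0
  else Real.log n - sInf (renyiH n α '' {P | IsPMF n P ∧ RatioBdd n ρ P})

/-- The closed-form expression for `c_α^{(∞)}(ρ)`, `α ∈ (0,1) ∪ (1,∞)`. -/
noncomputable def cInfinity (α ρ : ℝ) : ℝ :=
  (α - 1)⁻¹ * Real.log (1 + (1 + α * (ρ - 1) - ρ ^ α) / ((1 - α) * (ρ - 1)))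
    - α / (α - 1) * Real.log (1 + (1 + α * (ρ - 1) - ρ ^ α) / ((1 - α) * (ρ ^ α - 1)))

/-- `v(α) := c_α^{(∞)}(2)`, with the continuous extension at `α = 1`. -/
noncomputable def vFun (α : ℝ) : ℝ :=
  if α = 1 then Real.log (2 / (Real.exp 1 * Real.log 2))
  else Real.log ((α - 1) / ((2 : ℝ) ^ α - 2)) - α / (α - 1) * Real.log (α / ((2 : ℝ) ^ α - 1))

/-- `n*`: the maximal `i ∈ {1,…,m−1}` with `P i ≥ (m−i)⁻¹ ∑_{j=i+1}^n P j`. -/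
noncomputable def nStar (n m : ℕ) (P : ℕ → ℝ) : ℕ :=
  sSup {i : ℕ | 1 ≤ i ∧ i ≤ m - 1 ∧
    ((m : ℝ) - (i : ℝ))⁻¹ * ∑ j ∈ Finset.Icc (i + 1) n, P j ≤ P i}

/-- The pmf of `X̃_m` on `{1,…,m}`, built from a nonincreasing pmf `P` on `{1,…,n}`. -/
noncomputable def tildeX (n m : ℕ) (P : ℕ → ℝ) : ℕ → ℝ := fun i =>
  if P 1 < 1 / (m : ℝ) then 1 / (m : ℝ)
  else if i ≤ nStar n m P then P i
  else ((m : ℝ) - (nStar n m P : ℝ))⁻¹ * ∑ j ∈ Finset.Icc (nStar n m P + 1) n, P j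

/-- The pmf of `Ỹ_m` on `{1,…,m}`. -/
def tildeY (n m : ℕ) (P : ℕ → ℝ) : ℕ → ℝ := fun i =>
  if i = 1 then ∑ j ∈ Finset.Icc 1 (n - m + 1), P j else P (n - m + i)

/-- The pmf of `f(X)`: `(push n f P) j = ∑_{i ∈ {1,…,n}, f i = j} P i`. -/
def push (n : ℕ) (f : ℕ → ℕ) (P : ℕ → ℝ) : ℕ → ℝ := fun j =>
  ∑ i ∈ (Finset.Icc 1 n).filter (fun i => f i = j), P i

/-- The set `{1,…,n}^k` of source sequences of length `k`. -/
def seqSet (n k : ℕ) : Finset (Fin k → ℕ) := Fintype.piFinset fun _ => Finset.Icc 1 n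

/-- Product (i.i.d.) probability of a sequence. -/
def prodP (k : ℕ) (P : ℕ → ℝ) (x : Fin k → ℕ) : ℝ := ∏ i, P (x i)

/-- `g` is a ranking function for the i.i.d. vector on `{1,…,n}^k` with marginal `P`:
a bijection onto `{1,…,n^k}` which assigns smaller ranks to larger masses. -/
def IsRanking (n k : ℕ) (P : ℕ → ℝ) (g : (Fin k → ℕ) → ℕ) : Prop :=
  Set.BijOn g (↑(seqSet n k)) (Set.Icc 1 (n ^ k)) ∧
    ∀ x ∈ seqSet n k, ∀ y ∈ seqSet n k, prodP k P y < prodP k P x → g x < g y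

/-- The `ρ`-th guessing moment `E[g(Z^k)^ρ]`. -/
noncomputable def gmoment (n k : ℕ) (P : ℕ → ℝ) (g : (Fin k → ℕ) → ℕ) (ρ : ℝ) : ℝ :=
  ∑ x ∈ seqSet n k, prodP k P x * (g x : ℝ) ^ ρ

/-- Kraft inequality for a `D`-ary length function on `{1,…,n}^k`. -/
def Kraft (n k D : ℕ) (ℓ : (Fin k → ℕ) → ℕ) : Prop :=
  ∑ x ∈ seqSet n k, (D : ℝ) ^ (-(ℓ x : ℝ)) ≤ 1

/-- Scaled cumulant generating function `Λ_k(ρ)` of the codeword lengths (base-`D` log). -/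
noncomputable def cgf (n k D : ℕ) (P : ℕ → ℝ) (ℓ : (Fin k → ℕ) → ℕ) (ρ : ℝ) : ℝ :=
  (1 / (k : ℝ)) * Real.logb D (∑ x ∈ seqSet n k, prodP k P x * (D : ℝ) ^ (ρ * (ℓ x : ℝ)))

/-- `i_β` of Lemma 2. -/
noncomputable def iBeta (n : ℕ) (ρ β : ℝ) : ℕ := Nat.floor ((1 - (n : ℝ) * β) / ((ρ - 1) * β))

/-- The pmf `Q_β` of Lemma 2. -/
noncomputable def Qbeta (n : ℕ) (ρ β : ℝ) : ℕ → ℝ := fun j =>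
  if j ≤ iBeta n ρ β then ρ * β
  else if j = iBeta n ρ β + 1 then
    1 - ((n : ℝ) + (iBeta n ρ β : ℝ) * ρ - (iBeta n ρ β : ℝ) - 1) * β
  else β

noncomputable def AAux (α ρ : ℝ) : ℝ := (ρ ^ α - 1) / (ρ - 1)
noncomputable def xsAux (α ρ : ℝ) : ℝ := (α - 1) * (ρ ^ α - 1) / (α * (ρ ^ α - ρ))
noncomputable def gstAux (α ρ : ℝ) : ℝ := xsAux α ρ ^ (α - 1) * (AAux α ρ / α)

lemma hrpow1 {α ρ : ℝ} (hρ : 1 < ρ) (hα : 0 < α) : 1 < ρ ^ α :=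
  (Real.one_lt_rpow_iff_of_pos (by linarith)).mpr (Or.inl ⟨hρ, hα⟩)

lemma hsign {α ρ : ℝ} (hρ : 1 < ρ) (h : 1 < α) : ρ < ρ ^ α := by
  nth_rewrite 1 [← Real.rpow_one ρ]
  exact Real.rpow_lt_rpow_of_exponent_lt hρ h

lemma hsign' {α ρ : ℝ} (hρ : 1 < ρ) (h : α < 1) : ρ ^ α < ρ := by
  nth_rewrite 2 [← Real.rpow_one ρ]
  exact Real.rpow_lt_rpow_of_exponent_lt hρ h

lemma AAux_pos {α ρ : ℝ} (hρ : 1 < ρ) (hα : 0 < α) : 0 < AAux α ρ := by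
  have := hrpow1 hρ hα
  exact div_pos (by linarith) (by linarith)

lemma xsAux_pos {α ρ : ℝ} (hρ : 1 < ρ) (hα : 0 < α) (hα1 : α ≠ 1) : 0 < xsAux α ρ := by
  have h1 := hrpow1 hρ hα
  rcases lt_or_gt_of_ne hα1 with h | h
  · have := hsign' hρ h
    apply div_pos_of_neg_of_neg (by nlinarith) (by nlinarith)
  · have := hsign hρ h
    exact div_pos (by nlinarith) (by nlinarith)

lemma xsAux_le_one {α ρ : ℝ} (hρ : 1 < ρ) (hα : 0 < α) (hα1 : α ≠ 1) : xsAux α ρ ≤ 1 := by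
  have h1 := hrpow1 hρ hα
  rcases lt_or_gt_of_ne hα1 with h | h
  · have hb : ρ ^ α ≤ 1 + α * (ρ - 1) := by
      have := rpow_one_add_le_one_add_mul_self (s := ρ - 1) (by linarith) hα.le h.le
      simpa using this
    have hd := hsign' hρ h
    rw [xsAux, div_le_one_iff]
    right; right
    exact ⟨by nlinarith, by nlinarith⟩
  · have hb : 1 + α * (ρ - 1) ≤ ρ ^ α := by
      have := one_add_mul_self_le_rpow_one_add (s := ρ - 1) (by linarith) h.le
      simpa using this
    have hd := hsign hρ h
    rw [xsAux, div_le_one (by nlinarith)]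
    nlinarith

lemma gstAux_pos {α ρ : ℝ} (hρ : 1 < ρ) (hα : 0 < α) (hα1 : α ≠ 1) : 0 < gstAux α ρ :=
  mul_pos (Real.rpow_pos_of_pos (xsAux_pos hρ hα hα1) _)
    (div_pos (AAux_pos hρ hα) hα)

lemma core_gt {α : ℝ} (h : 1 < α) {u : ℝ} (hu : 0 < u) :
    u ^ (α - 1) * (α - (α - 1) * u) ≤ 1 := by
  have hα : (0 : ℝ) < α := by linarith
  have hgm := Real.geom_mean_le_arith_mean2_weighted
    (w₁ := 1 / α) (w₂ := (α - 1) / α) (p₁ := 1) (p₂ := u ^ α)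
    (by positivity) (div_nonneg (by linarith) hα.le) zero_le_one
    (Real.rpow_nonneg hu.le _) (by field_simp; ring)
  rw [Real.one_rpow] at hgm
  have h2 : (u ^ α) ^ ((α - 1) / α) = u ^ (α - 1) := by
    rw [← Real.rpow_mul hu.le]
    congr 1
    field_simp
  have h3 : u ^ α = u ^ (α - 1) * u := by
    rw [← Real.rpow_add_one hu.ne']
    norm_num
  rw [h2, h3] at hgm
  have hgm' : α * u ^ (α - 1) ≤ 1 + (α - 1) * (u ^ (α - 1) * u) := by
    rw [show 1 / α * 1 + (α - 1) / α * (u ^ (α - 1) * u)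
        = (1 + (α - 1) * (u ^ (α - 1) * u)) / α by ring] at hgm
    rw [one_mul] at hgm
    calc α * u ^ (α - 1) = u ^ (α - 1) * α := by ring
    _ ≤ 1 + (α - 1) * (u ^ (α - 1) * u) := (le_div_iff₀ hα).mp hgm
  ring_nf at hgm' ⊢
  linarith

lemma core_lt {α : ℝ} (hα : 0 < α) (h : α < 1) {u : ℝ} (hu : 0 < u) :
    1 ≤ u ^ (α - 1) * (α - (α - 1) * u) := by
  have hgm := Real.geom_mean_le_arith_mean2_weighted
    (w₁ := α) (w₂ := 1 - α) (p₁ := u ^ (α - 1)) (p₂ := u ^ α)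
    hα.le (by linarith) (Real.rpow_nonneg hu.le _)
    (Real.rpow_nonneg hu.le _) (by ring)
  have h1 : (u ^ (α - 1)) ^ α * (u ^ α) ^ (1 - α) = 1 := by
    rw [← Real.rpow_mul hu.le, ← Real.rpow_mul hu.le, ← Real.rpow_add hu]
    rw [show (α - 1) * α + α * (1 - α) = 0 by ring, Real.rpow_zero]
  have h3 : u ^ α = u ^ (α - 1) * u := by
    rw [← Real.rpow_add_one hu.ne']
    norm_num
  rw [h1, h3] at hgm
  ring_nf at hgm ⊢
  linarith

lemma hid_xs {α ρ : ℝ} (hρ : 1 < ρ) (hα : 0 < α) (hα1 : α ≠ 1) :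
    (AAux α ρ - 1) * xsAux α ρ = (α - 1) * AAux α ρ / α := by
  have h1 : ρ - 1 ≠ 0 := by linarith
  have h2 : ρ ^ α - ρ ≠ 0 := by
    rcases lt_or_gt_of_ne hα1 with h | h
    · have := hsign' hρ h; linarith
    · have := hsign hρ h; linarith
  rw [AAux, xsAux]
  field_simp
  ring

lemma g_factor {α ρ : ℝ} (hρ : 1 < ρ) (hα : 0 < α) (hα1 : α ≠ 1) {x : ℝ} (hx : 0 < x) :
    x ^ (α - 1) * (AAux α ρ - (AAux α ρ - 1) * x)
      = gstAux α ρ * ((x / xsAux α ρ) ^ (α - 1) * (α - (α - 1) * (x / xsAux α ρ))) := by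
  have hxs := xsAux_pos hρ hα hα1
  set u := x / xsAux α ρ with hu_def
  have hxu : x = xsAux α ρ * u := by rw [hu_def]; field_simp
  rw [hxu, Real.mul_rpow hxs.le (by positivity)]
  have h2 : AAux α ρ - (AAux α ρ - 1) * (xsAux α ρ * u) = AAux α ρ / α * (α - (α - 1) * u) := by
    rw [show (AAux α ρ - 1) * (xsAux α ρ * u) = (AAux α ρ - 1) * xsAux α ρ * u by ring,
      hid_xs hρ hα hα1]
    field_simp
  rw [h2, gstAux]
  ring

lemma g_le {α ρ : ℝ} (hρ : 1 < ρ) (h : 1 < α) {x : ℝ} (hx : 0 < x) :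
    x ^ (α - 1) * (AAux α ρ - (AAux α ρ - 1) * x) ≤ gstAux α ρ := by
  have hα : (0:ℝ) < α := by linarith
  have hα1 : α ≠ 1 := ne_of_gt h
  rw [g_factor hρ hα hα1 hx]
  have hu : 0 < x / xsAux α ρ := div_pos hx (xsAux_pos hρ hα hα1)
  calc gstAux α ρ * ((x / xsAux α ρ) ^ (α - 1) * (α - (α - 1) * (x / xsAux α ρ)))
      ≤ gstAux α ρ * 1 := by
        apply mul_le_mul_of_nonneg_left (core_gt h hu) (gstAux_pos hρ hα hα1).le
    _ = gstAux α ρ := mul_one _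

lemma g_ge {α ρ : ℝ} (hρ : 1 < ρ) (hα : 0 < α) (h : α < 1) {x : ℝ} (hx : 0 < x) :
    gstAux α ρ ≤ x ^ (α - 1) * (AAux α ρ - (AAux α ρ - 1) * x) := by
  have hα1 : α ≠ 1 := ne_of_lt h
  rw [g_factor hρ hα hα1 hx]
  have hu : 0 < x / xsAux α ρ := div_pos hx (xsAux_pos hρ hα hα1)
  calc gstAux α ρ = gstAux α ρ * 1 := (mul_one _).symm
    _ ≤ _ := mul_le_mul_of_nonneg_left (core_lt hα h hu) (gstAux_pos hρ hα hα1).le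

lemma cinf_eq' {α ρ : ℝ} (hρ : 1 < ρ) (hα : 0 < α) (hα1 : α ≠ 1) :
    cInfinity α ρ = Real.log (xsAux α ρ) + (α - 1)⁻¹ * Real.log (AAux α ρ / α) := by
  have h1 : ρ - 1 ≠ 0 := by linarith
  have hra := hrpow1 hρ hα
  have h2 : ρ ^ α - 1 ≠ 0 := by linarith
  have h3 : (1 : ℝ) - α ≠ 0 := by
    intro hc; exact hα1 (by linarith)
  have h4 : α - 1 ≠ 0 := by intro hc; exact hα1 (by linarith)
  have hxs := xsAux_pos hρ hα hα1
  have hAα : 0 < AAux α ρ / α := div_pos (AAux_pos hρ hα) hα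
  have h5 : ρ ^ α - ρ ≠ 0 := by
    rcases lt_or_gt_of_ne hα1 with h | h
    · have := hsign' hρ h; linarith
    · have := hsign hρ h; linarith
  have hB1 : 1 + (1 + α * (ρ - 1) - ρ ^ α) / ((1 - α) * (ρ - 1))
      = (AAux α ρ / α) / xsAux α ρ := by
    rw [AAux, xsAux]
    field_simp
    ring
  have hB2 : 1 + (1 + α * (ρ - 1) - ρ ^ α) / ((1 - α) * (ρ ^ α - 1)) = (xsAux α ρ)⁻¹ := by
    rw [xsAux]
    field_simp
    ring
  rw [cInfinity, hB1, hB2, Real.log_inv, Real.log_div (ne_of_gt hAα) (ne_of_gt hxs)]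
  field_simp
  ring

lemma cinf_eq {α ρ : ℝ} (hρ : 1 < ρ) (hα : 0 < α) (hα1 : α ≠ 1) :
    cInfinity α ρ = (α - 1)⁻¹ * Real.log (gstAux α ρ) := by
  have hxs := xsAux_pos hρ hα hα1
  have hAα : 0 < AAux α ρ / α := div_pos (AAux_pos hρ hα) hα
  have h4 : α - 1 ≠ 0 := fun hc => hα1 (by linarith)
  rw [cinf_eq' hρ hα hα1, gstAux,
    Real.log_mul (ne_of_gt (Real.rpow_pos_of_pos hxs _)) (ne_of_gt hAα),
    Real.log_rpow hxs]
  field_simp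

lemma AAux_le {α ρ : ℝ} (hρ : 1 < ρ) (h : 1 < α) : AAux α ρ ≤ α * ρ ^ (α - 1) := by
  have hρ0 : (0:ℝ) < ρ := by linarith
  have hραpos := Real.rpow_pos_of_pos hρ0 α
  have hber : 1 + α * (ρ⁻¹ - 1) ≤ ρ⁻¹ ^ α := by
    have := one_add_mul_self_le_rpow_one_add (s := ρ⁻¹ - 1) (by linarith [inv_pos.mpr hρ0]) h.le
    simpa using this
  have hinv : (ρ⁻¹ : ℝ) ^ α = (ρ ^ α)⁻¹ := Real.inv_rpow hρ0.le α
  have hm1 : ρ ^ (α - 1) = ρ ^ α / ρ := Real.rpow_sub_one (ne_of_gt hρ0) α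
  have h2 := mul_le_mul_of_nonneg_left hber hραpos.le
  rw [hinv, mul_inv_cancel₀ (ne_of_gt hραpos)] at h2
  have h5 : ρ ^ α * ρ⁻¹ = ρ ^ α / ρ := (div_eq_mul_inv _ _).symm
  have h6 : ρ ^ α / ρ * ρ = ρ ^ α := div_mul_cancel₀ _ (ne_of_gt hρ0)
  rw [AAux, hm1, div_le_iff₀ (by linarith)]
  nlinarith [h2, h5, h6]

lemma AAux_ge {α ρ : ℝ} (hρ : 1 < ρ) (hα : 0 < α) (h : α < 1) : α * ρ ^ (α - 1) ≤ AAux α ρ := by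
  have hρ0 : (0:ℝ) < ρ := by linarith
  have hραpos := Real.rpow_pos_of_pos hρ0 α
  have hber : ρ⁻¹ ^ α ≤ 1 + α * (ρ⁻¹ - 1) := by
    have := rpow_one_add_le_one_add_mul_self (s := ρ⁻¹ - 1) (by linarith [inv_pos.mpr hρ0]) hα.le h.le
    simpa using this
  have hinv : (ρ⁻¹ : ℝ) ^ α = (ρ ^ α)⁻¹ := Real.inv_rpow hρ0.le α
  have hm1 : ρ ^ (α - 1) = ρ ^ α / ρ := Real.rpow_sub_one (ne_of_gt hρ0) α
  have h2 := mul_le_mul_of_nonneg_left hber hραpos.le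
  rw [hinv, mul_inv_cancel₀ (ne_of_gt hραpos)] at h2
  have h5 : ρ ^ α * ρ⁻¹ = ρ ^ α / ρ := (div_eq_mul_inv _ _).symm
  have h6 : ρ ^ α / ρ * ρ = ρ ^ α := div_mul_cancel₀ _ (ne_of_gt hρ0)
  rw [AAux, hm1, le_div_iff₀ (by linarith)]
  nlinarith [h2, h5, h6]

lemma cinf_le_log {α ρ : ℝ} (hρ : 1 < ρ) (hα : 0 < α) (hα1 : α ≠ 1) :
    cInfinity α ρ ≤ Real.log ρ := by
  have hρ0 : (0:ℝ) < ρ := by linarith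
  have hxs := xsAux_pos hρ hα hα1
  have hAα : 0 < AAux α ρ / α := div_pos (AAux_pos hρ hα) hα
  rw [cinf_eq' hρ hα hα1]
  have hlogxs : Real.log (xsAux α ρ) ≤ 0 :=
    Real.log_nonpos hxs.le (xsAux_le_one hρ hα hα1)
  have hrpm : Real.log (ρ ^ (α - 1)) = (α - 1) * Real.log ρ := Real.log_rpow hρ0 _
  rcases lt_or_gt_of_ne hα1 with h | h
  · -- α < 1 : AAux/α ≥ ρ^(α-1), (α-1)⁻¹ < 0
    have hge : ρ ^ (α - 1) ≤ AAux α ρ / α := by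
      rw [le_div_iff₀ hα]
      have := AAux_ge hρ hα h
      linarith
    have hlog : (α - 1) * Real.log ρ ≤ Real.log (AAux α ρ / α) := by
      rw [← hrpm]
      exact Real.log_le_log (Real.rpow_pos_of_pos hρ0 _) hge
    have hneg : (α - 1)⁻¹ < 0 := inv_lt_zero.mpr (by linarith)
    have := mul_le_mul_of_nonpos_left hlog hneg.le
    have hcalc : (α - 1)⁻¹ * ((α - 1) * Real.log ρ) = Real.log ρ := by
      rw [inv_mul_eq_div]
      exact mul_div_cancel_left₀ _ (by intro hc; exact hα1 (by linarith))
    linarith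
  · have hle : AAux α ρ / α ≤ ρ ^ (α - 1) := by
      rw [div_le_iff₀ hα]
      have := AAux_le hρ h
      linarith
    have hlog : Real.log (AAux α ρ / α) ≤ (α - 1) * Real.log ρ := by
      rw [← hrpm]
      exact Real.log_le_log hAα hle
    have hpos : (0:ℝ) < (α - 1)⁻¹ := inv_pos.mpr (by linarith)
    have := mul_le_mul_of_nonneg_left hlog hpos.le
    have hcalc : (α - 1)⁻¹ * ((α - 1) * Real.log ρ) = Real.log ρ := by
      rw [inv_mul_eq_div]
      exact mul_div_cancel_left₀ _ (by intro hc; exact hα1 (by linarith))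
    linarith

lemma chord_le {α a b p : ℝ} (h : 1 ≤ α) (ha : 0 < a) (hab : a < b) (hp1 : a ≤ p)
    (hp2 : p ≤ b) : (b - a) * p ^ α ≤ (b - p) * a ^ α + (p - a) * b ^ α := by
  have hba : (0:ℝ) < b - a := by linarith
  have ht : 0 ≤ (b - p) / (b - a) := div_nonneg (by linarith) hba.le
  have hs : 0 ≤ (p - a) / (b - a) := div_nonneg (by linarith) hba.le
  have hts : (b - p) / (b - a) + (p - a) / (b - a) = 1 := by field_simp; ring
  have hcv := (convexOn_rpow h).2 (Set.mem_Ici.mpr ha.le)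
    (Set.mem_Ici.mpr (by linarith : (0:ℝ) ≤ b)) ht hs hts
  simp only [smul_eq_mul] at hcv
  have hcomb : (b - p) / (b - a) * a + (p - a) / (b - a) * b = p := by
    field_simp; ring
  rw [hcomb] at hcv
  have := mul_le_mul_of_nonneg_left hcv hba.le
  calc (b - a) * p ^ α ≤ (b - a) * ((b - p) / (b - a) * a ^ α + (p - a) / (b - a) * b ^ α) := this
    _ = (b - p) * a ^ α + (p - a) * b ^ α := by field_simp; try ring

lemma chord_ge {α a b p : ℝ} (hα : 0 ≤ α) (h : α ≤ 1) (ha : 0 < a) (hab : a < b) (hp1 : a ≤ p)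
    (hp2 : p ≤ b) : (b - p) * a ^ α + (p - a) * b ^ α ≤ (b - a) * p ^ α := by
  have hba : (0:ℝ) < b - a := by linarith
  have ht : 0 ≤ (b - p) / (b - a) := div_nonneg (by linarith) hba.le
  have hs : 0 ≤ (p - a) / (b - a) := div_nonneg (by linarith) hba.le
  have hts : (b - p) / (b - a) + (p - a) / (b - a) = 1 := by field_simp; ring
  have hcv := (Real.concaveOn_rpow hα h).2 (Set.mem_Ici.mpr ha.le)
    (Set.mem_Ici.mpr (by linarith : (0:ℝ) ≤ b)) ht hs hts
  simp only [smul_eq_mul] at hcv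
  have hcomb : (b - p) / (b - a) * a + (p - a) / (b - a) * b = p := by
    field_simp; ring
  rw [hcomb] at hcv
  have := mul_le_mul_of_nonneg_left hcv hba.le
  calc (b - p) * a ^ α + (p - a) * b ^ α
      = (b - a) * ((b - p) / (b - a) * a ^ α + (p - a) / (b - a) * b ^ α) := by field_simp; try ring
    _ ≤ (b - a) * p ^ α := this

lemma renyi_ge {α ρ : ℝ} (hρ : 1 < ρ) (hα : 0 < α) (hα1 : α ≠ 1) {n : ℕ} (hn : 1 ≤ n)
    {P : ℕ → ℝ} (h1 : IsPMF n P) (h2 : RatioBdd n ρ P) :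
    Real.log n - cInfinity α ρ ≤ renyiH n α P := by
  obtain ⟨hpos, hsum⟩ := h1
  have hne : (Finset.Icc 1 n).Nonempty := ⟨1, by simp [Finset.mem_Icc, hn]⟩
  obtain ⟨j₀, hj₀, hmin⟩ := Finset.exists_min_image (Finset.Icc 1 n) P hne
  set β := P j₀ with hβdef
  have hβ : 0 < β := hpos j₀ hj₀
  have hcard : (Finset.Icc 1 n).card = n := by rw [Nat.card_Icc]; omega
  have hnpos : (0:ℝ) < n := by exact_mod_cast hn
  have hnβ : (n:ℝ) * β ≤ 1 := by
    have hle := Finset.card_nsmul_le_sum (Finset.Icc 1 n) P β (fun i hi => hmin i hi)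
    rw [hcard, nsmul_eq_mul, hsum] at hle
    exact hle
  set S := ∑ i ∈ Finset.Icc 1 n, P i ^ α with hSdef
  have hS : 0 < S :=
    Finset.sum_pos (fun i hi => Real.rpow_pos_of_pos (hpos i hi) α) hne
  set x := (n:ℝ) * β with hxdef
  have hx : 0 < x := by positivity
  have hβρ : β < ρ * β := by nlinarith
  -- the right-hand side sum identity
  have hR : ∑ i ∈ Finset.Icc 1 n, ((ρ*β - P i) * β^α + (P i - β)*(ρ*β)^α)
      = ((n:ℝ)*(ρ*β) - 1)*β^α + (1 - (n:ℝ)*β)*(ρ*β)^α := by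
    rw [Finset.sum_add_distrib, ← Finset.sum_mul, ← Finset.sum_mul,
      Finset.sum_sub_distrib, Finset.sum_sub_distrib, hsum]
    simp only [Finset.sum_const, hcard, nsmul_eq_mul]
    try ring
  have hN1 : ((n:ℝ))^(α-1) ≠ 0 := ne_of_gt (Real.rpow_pos_of_pos hnpos _)
  have hN2 : ((n:ℝ))^(1-α) = (((n:ℝ))^(α-1))⁻¹ := by
    rw [← Real.rpow_neg hnpos.le]
    norm_num
  have hβα : β ^ α = β ^ (α-1) * β := by
    rw [← Real.rpow_add_one hβ.ne']; norm_num
  have hxx : x^(α-1) = ((n:ℝ))^(α-1) * β^(α-1) := Real.mul_rpow hnpos.le hβ.le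
  have hρβα : (ρ*β)^α = ρ^α * β^α := Real.mul_rpow (by linarith) hβ.le
  have e1 : ((n:ℝ)*(ρ*β) - 1)*β^α + (1 - (n:ℝ)*β)*(ρ*β)^α
      = (ρ*β - β) * (((n:ℝ))^(1-α) * (x^(α-1) * (AAux α ρ - (AAux α ρ - 1) * x))) := by
    rw [hρβα, hβα, hxx, hN2, AAux, hxdef]
    have hρ1 : ρ - 1 ≠ 0 := by linarith
    field_simp
    ring
  rw [renyiH, if_neg hα1]
  rcases lt_or_gt_of_ne hα1 with hlt | hgt
  · -- α < 1
    have hch : ∀ i ∈ Finset.Icc 1 n,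
        (ρ*β - P i) * β^α + (P i - β)*(ρ*β)^α ≤ (ρ*β - β) * P i ^ α := by
      intro i hi
      exact chord_ge hα.le hlt.le hβ hβρ (hmin i hi) (h2 i hi j₀ hj₀)
    have hsum2 := Finset.sum_le_sum hch
    rw [hR, ← Finset.mul_sum, ← hSdef, e1] at hsum2
    have hgS : ((n:ℝ))^(1-α) * (x^(α-1) * (AAux α ρ - (AAux α ρ - 1) * x)) ≤ S :=
      le_of_mul_le_mul_left (by linarith) (by linarith : (0:ℝ) < ρ*β - β)
    have hgs2 : ((n:ℝ))^(1-α) * gstAux α ρ ≤ S := by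
      have := mul_le_mul_of_nonneg_left (g_ge hρ hα hlt hx) (Real.rpow_pos_of_pos hnpos (1-α)).le
      linarith
    have hgstpos := gstAux_pos hρ hα hα1
    have hlog : Real.log (((n:ℝ))^(1-α) * gstAux α ρ) ≤ Real.log S :=
      Real.log_le_log (mul_pos (Real.rpow_pos_of_pos hnpos _) hgstpos) hgs2
    have hloge : Real.log (((n:ℝ))^(1-α) * gstAux α ρ)
        = (1-α)*Real.log n + Real.log (gstAux α ρ) := by
      rw [Real.log_mul (ne_of_gt (Real.rpow_pos_of_pos hnpos _)) (ne_of_gt hgstpos),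
        Real.log_rpow hnpos]
    have h1α : (0:ℝ) < 1 - α := by linarith
    have hmul := mul_le_mul_of_nonneg_left hlog (inv_pos.mpr h1α).le
    rw [hloge] at hmul
    rw [cinf_eq hρ hα hα1]
    have hfact : (1-α)⁻¹ * ((1-α)*Real.log n + Real.log (gstAux α ρ))
        = Real.log n - (α-1)⁻¹ * Real.log (gstAux α ρ) := by
      have hne1 : (1:ℝ)-α ≠ 0 := by linarith
      have hne2 : α-(1:ℝ) ≠ 0 := by intro hc; exact hα1 (by linarith)
      field_simp
      ring
    linarith
  · -- α > 1
    have hch : ∀ i ∈ Finset.Icc 1 n,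
        (ρ*β - β) * P i ^ α ≤ (ρ*β - P i) * β^α + (P i - β)*(ρ*β)^α := by
      intro i hi
      exact chord_le hgt.le hβ hβρ (hmin i hi) (h2 i hi j₀ hj₀)
    have hsum2 := Finset.sum_le_sum hch
    rw [hR, ← Finset.mul_sum, ← hSdef, e1] at hsum2
    have hgS : S ≤ ((n:ℝ))^(1-α) * (x^(α-1) * (AAux α ρ - (AAux α ρ - 1) * x)) :=
      le_of_mul_le_mul_left (by linarith) (by linarith : (0:ℝ) < ρ*β - β)
    have hgs2 : S ≤ ((n:ℝ))^(1-α) * gstAux α ρ := by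
      have := mul_le_mul_of_nonneg_left (g_le hρ hgt hx)
        (Real.rpow_pos_of_pos hnpos (1-α)).le
      linarith
    have hgstpos := gstAux_pos hρ hα hα1
    have hlog : Real.log S ≤ Real.log (((n:ℝ))^(1-α) * gstAux α ρ) :=
      Real.log_le_log hS hgs2
    have hloge : Real.log (((n:ℝ))^(1-α) * gstAux α ρ)
        = (1-α)*Real.log n + Real.log (gstAux α ρ) := by
      rw [Real.log_mul (ne_of_gt (Real.rpow_pos_of_pos hnpos _)) (ne_of_gt hgstpos),
        Real.log_rpow hnpos]
    have h1α : (1:ℝ)-α < 0 := by linarith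
    have hmul := mul_le_mul_of_nonpos_left hlog (inv_nonpos.mpr h1α.le)
    rw [hloge] at hmul
    rw [cinf_eq hρ hα hα1]
    have hfact : (1-α)⁻¹ * ((1-α)*Real.log n + Real.log (gstAux α ρ))
        = Real.log n - (α-1)⁻¹ * Real.log (gstAux α ρ) := by
      have hne1 : (1:ℝ)-α ≠ 0 := by linarith
      have hne2 : α-(1:ℝ) ≠ 0 := by intro hc; exact hα1 (by linarith)
      field_simp
      ring
    linarith

lemma unif_pmf {n : ℕ} (hn : 1 ≤ n) : IsPMF n (fun _ => 1 / (n:ℝ)) := by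
  have hnpos : (0:ℝ) < n := by exact_mod_cast hn
  constructor
  · intro i _; positivity
  · rw [Finset.sum_const, Nat.card_Icc, nsmul_eq_mul]
    have : (n + 1 - 1 : ℕ) = n := by omega
    rw [this]
    field_simp

lemma unif_ratio {n : ℕ} (ρ : ℝ) (hρ : 1 ≤ ρ) : RatioBdd n ρ (fun _ => 1 / (n:ℝ)) := by
  intro i _ j _
  have : (0:ℝ) ≤ 1 / (n:ℝ) := by positivity
  nlinarith

lemma unif_renyi {α : ℝ} (hα1 : α ≠ 1) {n : ℕ} (hn : 1 ≤ n) :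
    renyiH n α (fun _ => 1 / (n:ℝ)) = Real.log n := by
  have hnpos : (0:ℝ) < n := by exact_mod_cast hn
  rw [renyiH, if_neg hα1]
  have hcard : (Finset.Icc 1 n).card = n := by rw [Nat.card_Icc]; omega
  rw [Finset.sum_const, hcard, nsmul_eq_mul]
  have h1 : (1 / (n:ℝ)) ^ α = ((n:ℝ) ^ α)⁻¹ := by
    rw [one_div, Real.inv_rpow hnpos.le]
  rw [h1, Real.log_mul (ne_of_gt hnpos) (by positivity), Real.log_inv, Real.log_rpow hnpos]
  have hne : (1:ℝ) - α ≠ 0 := fun hc => hα1 (by linarith)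
  field_simp
  ring

lemma sum_split (f : ℕ → ℝ) (n : ℕ) :
    ∑ i ∈ Finset.Icc 1 (2*n), f i = ∑ j ∈ Finset.Icc 1 n, (f (2*j-1) + f (2*j)) := by
  induction n with
  | zero => simp
  | succ m ih =>
    have e2 : 2*(m+1) = 2*m+1+1 := by ring
    rw [e2, Finset.sum_Icc_succ_top (by omega) f, Finset.sum_Icc_succ_top (by omega) f, ih,
      Finset.sum_Icc_succ_top (by omega) (fun j => f (2*j-1) + f (2*j))]
    have e3 : 2*(m+1)-1 = 2*m+1 := by omega
    have e4 : 2*(m+1) = 2*m+1+1 := by omega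
    rw [e3, e4]
    ring

lemma split_pmf {n : ℕ} (hn : 1 ≤ n) {P : ℕ → ℝ} (h1 : IsPMF n P) :
    IsPMF (2*n) (fun i => P ((i+1)/2) / 2) := by
  obtain ⟨hpos, hsum⟩ := h1
  constructor
  · intro i hi
    rw [Finset.mem_Icc] at hi
    have hmem : (i+1)/2 ∈ Finset.Icc 1 n := by rw [Finset.mem_Icc]; omega
    have := hpos _ hmem
    positivity
  · rw [sum_split]
    rw [Finset.sum_congr rfl (fun j hj => ?_), hsum]
    rw [Finset.mem_Icc] at hj
    have e1 : (2*j-1+1)/2 = j := by omega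
    have e2 : (2*j+1)/2 = j := by omega
    simp only [e1, e2]
    ring

lemma split_ratio {n : ℕ} (ρ : ℝ) {P : ℕ → ℝ} (h2 : RatioBdd n ρ P) :
    RatioBdd (2*n) ρ (fun i => P ((i+1)/2) / 2) := by
  intro i hi j hj
  rw [Finset.mem_Icc] at hi hj
  have hmi : (i+1)/2 ∈ Finset.Icc 1 n := by rw [Finset.mem_Icc]; omega
  have hmj : (j+1)/2 ∈ Finset.Icc 1 n := by rw [Finset.mem_Icc]; omega
  have := h2 _ hmi _ hmj
  simp only
  linarith

lemma split_renyi {α : ℝ} (hα1 : α ≠ 1) {n : ℕ} (hn : 1 ≤ n) {P : ℕ → ℝ} (h1 : IsPMF n P) :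
    renyiH (2*n) α (fun i => P ((i+1)/2) / 2) = Real.log 2 + renyiH n α P := by
  obtain ⟨hpos, _⟩ := h1
  have hne : (Finset.Icc 1 n).Nonempty := ⟨1, by simp [Finset.mem_Icc, hn]⟩
  have hS : 0 < ∑ i ∈ Finset.Icc 1 n, P i ^ α :=
    Finset.sum_pos (fun i hi => Real.rpow_pos_of_pos (hpos i hi) α) hne
  have h2α : (0:ℝ) < (2:ℝ)^α := Real.rpow_pos_of_pos two_pos α
  rw [renyiH, renyiH, if_neg hα1, if_neg hα1]
  have hterm : ∀ j ∈ Finset.Icc 1 n,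
      ((P ((2*j-1+1)/2) / 2 : ℝ)) ^ α + (P ((2*j+1)/2) / 2) ^ α
        = P j ^ α * ((2:ℝ)^(1-α)) := by
    intro j hj
    rw [Finset.mem_Icc] at hj
    have e1 : (2*j-1+1)/2 = j := by omega
    have e2 : (2*j+1)/2 = j := by omega
    rw [e1, e2, Real.div_rpow (hpos j (by rw [Finset.mem_Icc]; omega)).le two_pos.le,
      Real.rpow_sub two_pos, Real.rpow_one]
    field_simp
    ring
  have hsum2 : ∑ i ∈ Finset.Icc 1 (2*n), (P ((i+1)/2) / 2) ^ α
      = (2:ℝ)^(1-α) * ∑ i ∈ Finset.Icc 1 n, P i ^ α := by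
    rw [sum_split (fun i => (P ((i+1)/2) / 2 : ℝ) ^ α) n]
    rw [Finset.sum_congr rfl hterm, ← Finset.sum_mul, mul_comm]
  rw [hsum2, Real.log_mul (by positivity) (ne_of_gt hS), Real.log_rpow two_pos]
  have hne1 : (1:ℝ) - α ≠ 0 := fun hc => hα1 (by linarith)
  field_simp

theorem stmt7 (ρ α : ℝ) (hρ : 1 < ρ) (hα : 0 < α) (hα1 : α ≠ 1) (n : ℕ) (hn : 1 ≤ n) :
    0 ≤ cN α ρ n ∧ cN α ρ n ≤ cN α ρ (2 * n) ∧ cN α ρ (2 * n) ≤ cInfinity α ρ ∧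
      cInfinity α ρ ≤ Real.log ρ := by
  -- generic facts about the sets
  set T : ℕ → Set ℝ := fun m => renyiH m α '' {P | IsPMF m P ∧ RatioBdd m ρ P} with hT
  have hmemU : ∀ m : ℕ, 1 ≤ m → Real.log m ∈ T m := by
    intro m hm
    exact ⟨fun _ => 1 / (m:ℝ), ⟨unif_pmf hm, unif_ratio ρ hρ.le⟩, unif_renyi hα1 hm⟩
  have hTne : ∀ m : ℕ, 1 ≤ m → (T m).Nonempty := fun m hm => ⟨_, hmemU m hm⟩
  have hTbdd : ∀ m : ℕ, 1 ≤ m → ∀ y ∈ T m, Real.log m - cInfinity α ρ ≤ y := by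
    rintro m hm y ⟨P, ⟨h1, h2⟩, rfl⟩
    exact renyi_ge hρ hα hα1 hm h1 h2
  have hTbb : ∀ m : ℕ, 1 ≤ m → BddBelow (T m) := fun m hm =>
    ⟨Real.log m - cInfinity α ρ, fun y hy => hTbdd m hm y hy⟩
  have hInfLe : ∀ m : ℕ, 1 ≤ m → sInf (T m) ≤ Real.log m := fun m hm =>
    csInf_le (hTbb m hm) (hmemU m hm)
  have hLeInf : ∀ m : ℕ, 1 ≤ m → Real.log m - cInfinity α ρ ≤ sInf (T m) := fun m hm =>
    le_csInf (hTne m hm) (hTbdd m hm)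
  -- monotonicity step
  have hmono : ∀ m : ℕ, 1 ≤ m → sInf (T (2*m)) ≤ Real.log 2 + sInf (T m) := by
    intro m hm
    have h2m : 1 ≤ 2*m := by omega
    have key : sInf (T (2*m)) - Real.log 2 ≤ sInf (T m) := by
      apply le_csInf (hTne m hm)
      rintro b ⟨P, ⟨h1, h2⟩, rfl⟩
      have hmem2 : Real.log 2 + renyiH m α P ∈ T (2*m) := by
        refine ⟨fun i => P ((i+1)/2) / 2, ⟨split_pmf hm h1, split_ratio ρ h2⟩, ?_⟩
        exact split_renyi hα1 hm h1
      have := csInf_le (hTbb (2*m) h2m) hmem2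
      linarith
    linarith
  -- casts
  have hc2n : Real.log ((2*n : ℕ) : ℝ) = Real.log 2 + Real.log n := by
    push_cast
    rw [Real.log_mul two_ne_zero (by exact_mod_cast Nat.one_le_iff_ne_zero.mp hn)]
  have h2n1 : ¬ (2*n ≤ 1) := by omega
  have hcinf_nonneg : 0 ≤ cInfinity α ρ := by
    have h1 := hLeInf 1 le_rfl
    have h2 := hInfLe 1 le_rfl
    simp only [Nat.cast_one, Real.log_one] at h1 h2
    linarith
  by_cases hn1 : n ≤ 1
  · -- n = 1
    have hn1' : n = 1 := by omega
    subst hn1'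
    rw [cN, if_pos le_rfl, cN, if_neg h2n1]
    refine ⟨le_rfl, ?_, ?_, cinf_le_log hρ hα hα1⟩
    · have h := hInfLe (2*1) (by omega)
      simp only [hT] at h
      linarith
    · have h := hLeInf (2*1) (by omega)
      simp only [hT] at h
      linarith
  · rw [cN, if_neg hn1, cN, if_neg h2n1]
    have hn2 : 1 ≤ n := hn
    refine ⟨?_, ?_, ?_, cinf_le_log hρ hα hα1⟩
    · have h := hInfLe n hn
      simp only [hT] at h
      linarith
    · have h1 := hmono n hn
      have h2 := hInfLe n hn
      simp only [hT] at h1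
      rw [hc2n]
      linarith
    · have h := hLeInf (2*n) (by omega)
      simp only [hT] at h
      rw [hc2n, ← hc2n]
      linarith
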